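/- Let F:[0,1]^n → ℝ≥0 be differentiable and γ-weakly DR-submodular for γ ∈ (0,1]. For every x, y ∈ [0,1]^n with y ≥ 0 and x − y ≥ 0 (componentwise), ⟨∇F(x), y⟩ ≤ (1/γ)·(F(x) − F(x−y)). -/

import Mathlib

open Set

/-- For a differentiable, nonnegative, γ-weakly DR-submodular
`F : [0,1]^n → ℝ≥0`, if `y ≥ 0` and `x − y ≥ 0`, then
`⟨∇F(x), y⟩ ≤ (1/γ)(F(x) − F(x−y))`. -/
theorem stmt3 (n : ℕ) (γ : ℝ) (hγ0 : 0 < γ) (hγ1 : γ ≤ 1)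
    (F : (Fin n → ℝ) → ℝ)
    (hF : Differentiable ℝ F)
    (hnonneg : ∀ x ∈ Icc (0 : Fin n → ℝ) 1, 0 ≤ F x)
    (hDR : ∀ x ∈ Icc (0 : Fin n → ℝ) 1, ∀ y ∈ Icc (0 : Fin n → ℝ) 1,
      x ≤ y → ∀ i, γ * fderiv ℝ F y (Pi.single i 1) ≤ fderiv ℝ F x (Pi.single i 1))
    (x y : Fin n → ℝ) (hx : x ∈ Icc (0 : Fin n → ℝ) 1) (hy : y ∈ Icc (0 : Fin n → ℝ) 1)
    (hy0 : 0 ≤ y) (hdiff : 0 ≤ x - y) :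
    fderiv ℝ F x y ≤ 1 / γ * (F x - F (x - y)) := by
  set c : ℝ := fderiv ℝ F x y with hc
  have hyrep : y = ∑ i, y i • (Pi.single i 1 : Fin n → ℝ) := by
    ext j
    simp [Finset.sum_apply, Pi.single_apply]
  have hexp : ∀ w, fderiv ℝ F w y = ∑ i, y i * fderiv ℝ F w (Pi.single i 1) := by
    intro w
    conv_lhs => rw [hyrep]
    rw [map_sum]
    simp
  have key : ∀ z ∈ Icc (0:Fin n→ℝ) 1, z ≤ x → γ * c ≤ fderiv ℝ F z y := by
    intro z hz hzx
    rw [hc, hexp x, hexp z, Finset.mul_sum]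
    apply Finset.sum_le_sum
    intro i _
    have h := hDR z hz x hx hzx i
    have h2 : (0:ℝ) ≤ y i := hy0 i
    nlinarith
  set L : ℝ → (Fin n → ℝ) := fun t => x - y + t • y with hL
  have hLmem : ∀ t ∈ Icc (0:ℝ) 1, L t ∈ Icc (0:Fin n→ℝ) 1 ∧ L t ≤ x := by
    intro t ht
    have h0 := ht.1; have h1 := ht.2
    refine ⟨⟨fun i => ?_, fun i => ?_⟩, fun i => ?_⟩
    · have ha : (0:ℝ) ≤ x i - y i := hdiff i
      have hb : (0:ℝ) ≤ y i := hy0 i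
      show (0:ℝ) ≤ x i - y i + t * y i
      nlinarith
    · have ha : x i ≤ 1 := hx.2 i
      have hb : (0:ℝ) ≤ y i := hy0 i
      show x i - y i + t * y i ≤ 1
      nlinarith
    · have hb : (0:ℝ) ≤ y i := hy0 i
      show x i - y i + t * y i ≤ x i
      nlinarith
  have hLd : ∀ t : ℝ, HasDerivAt L y t := by
    intro t
    simpa [hL] using ((hasDerivAt_id t).smul_const y).const_add (x - y)
  set h : ℝ → ℝ := fun t => F (L t) - t * (γ * c) with hh
  have hhd : ∀ t : ℝ, HasDerivAt h (fderiv ℝ F (L t) y - γ * c) t := by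
    intro t
    exact ((hF (L t)).hasFDerivAt.comp_hasDerivAt t (hLd t)).sub
      (hasDerivAt_mul_const (γ * c))
  have hmono : MonotoneOn h (Icc (0:ℝ) 1) := by
    apply monotoneOn_of_deriv_nonneg (convex_Icc 0 1)
    · exact Continuous.continuousOn (by
        exact continuous_iff_continuousAt.2 fun t => (hhd t).continuousAt)
    · intro t ht
      exact (hhd t).differentiableAt.differentiableWithinAt
    · intro t ht
      rw [interior_Icc] at ht
      rw [(hhd t).deriv]
      have hm := hLmem t ⟨le_of_lt ht.1, le_of_lt ht.2⟩
      have := key (L t) hm.1 hm.2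
      linarith
  have h01 : h 0 ≤ h 1 := hmono (by constructor <;> norm_num) (by constructor <;> norm_num) zero_le_one
  have hL0 : L 0 = x - y := by simp [hL]
  have hL1 : L 1 = x := by simp [hL]
  rw [hh] at h01
  simp only [hL0, hL1, zero_mul, sub_zero, one_mul] at h01
  rw [one_div, inv_mul_eq_div, le_div_iff₀ hγ0]
  nlinarith
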